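/- arXiv:2605.28172 — 4 statements merged into one kernel-verified Lean document; each statement's English description precedes it below -/
import Mathlib

section
/- Fix θ' ∈ [0, π], a unit vector a ∈ ℝ³, and v ∈ ℝ³. Then max over θ ∈ [0,θ'] and unit vectors w of ⟨Exp(θw)a, v⟩ equals ‖v‖ if the angle α between a and v satisfies α ≤ θ', and equals ‖v‖·cos(α − θ') if α > θ'. -/
open Matrix Set MeasureTheory Pointwise

set_option maxHeartbeats 1000000
noncomputable section

abbrev E3 := EuclideanSpace ℝ (Fin 3)

def tv (p : E3) : Fin 3 → ℝ := (WithLp.equiv 2 (Fin 3 → ℝ)) p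

def ofv (x : Fin 3 → ℝ) : E3 := (WithLp.equiv 2 (Fin 3 → ℝ)).symm x

def isSO3 (R : Matrix (Fin 3) (Fin 3) ℝ) : Prop := R.transpose * R = 1 ∧ R.det = 1

abbrev Pose := Matrix (Fin 3) (Fin 3) ℝ × E3

def act (T : Pose) (p : E3) : E3 := ofv (T.1.mulVec (tv p)) + T.2

def pmul (T₁ T₂ : Pose) : Pose := (T₁.1 * T₂.1, ofv (T₁.1.mulVec (tv T₂.2)) + T₁.2)

def rotDist (R₁ R₂ : Matrix (Fin 3) (Fin 3) ℝ) : ℝ :=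
  Real.arccos (((R₁ * R₂.transpose).trace - 1) / 2)

def phiS (𝒮 : Set E3) (𝒯 : Set Pose) : Set E3 := {q | ∃ p ∈ 𝒮, ∃ T ∈ 𝒯, q = act T p}

def hat (w : E3) : Matrix (Fin 3) (Fin 3) ℝ :=
  !![0, -(tv w 2), tv w 1; tv w 2, 0, -(tv w 0); -(tv w 1), tv w 0, 0]

def rod (θ : ℝ) (w : E3) : Matrix (Fin 3) (Fin 3) ℝ :=
  1 + Real.sin θ • hat w + (1 - Real.cos θ) • (hat w * hat w)

namespace S10

def cr (w a : E3) : E3 := ofv ![w 1 * a 2 - w 2 * a 1, w 2 * a 0 - w 0 * a 2, w 0 * a 1 - w 1 * a 0]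

lemma inner3 (x y : E3) : (inner ℝ x y : ℝ) = x 0 * y 0 + x 1 * y 1 + x 2 * y 2 := by
  simp [PiLp.inner_apply, Fin.sum_univ_three]; ring

lemma cr_apply0 (w a : E3) : cr w a 0 = w 1 * a 2 - w 2 * a 1 := rfl
lemma cr_apply1 (w a : E3) : cr w a 1 = w 2 * a 0 - w 0 * a 2 := rfl
lemma cr_apply2 (w a : E3) : cr w a 2 = w 0 * a 1 - w 1 * a 0 := rfl

lemma rod_mulVec (θ : ℝ) (w a : E3) :
    ofv ((rod θ w).mulVec (tv a)) =
      a + Real.sin θ • cr w a + (1 - Real.cos θ) • cr w (cr w a) := by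
  ext i
  fin_cases i <;>
    simp [rod, hat, cr, ofv, tv, Matrix.mulVec, dotProduct, Fin.sum_univ_three,
      Matrix.one_apply, Matrix.mul_apply] <;> ring

lemma inner_cr_left (w a : E3) : (inner ℝ (cr w a) w : ℝ) = 0 := by
  simp [inner3, Fin.sum_univ_three, cr_apply0, cr_apply1, cr_apply2]; ring

lemma inner_cr_right (w a : E3) : (inner ℝ (cr w a) a : ℝ) = 0 := by
  simp [inner3, Fin.sum_univ_three, cr_apply0, cr_apply1, cr_apply2]; ring

lemma cr_cr (w a : E3) : cr w (cr w a) = (inner ℝ w a : ℝ) • w - (inner ℝ w w : ℝ) • a := by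
  ext i
  fin_cases i <;>
    simp only [inner3] <;> simp [inner3, Fin.sum_univ_three, cr_apply0, cr_apply1, cr_apply2, cr, ofv] <;> ring

lemma cr_cr' (a v : E3) : cr (cr a v) a = (inner ℝ a a : ℝ) • v - (inner ℝ a v : ℝ) • a := by
  ext i
  fin_cases i <;>
    simp only [inner3] <;> simp [inner3, Fin.sum_univ_three, cr_apply0, cr_apply1, cr_apply2, cr, ofv] <;> ring

lemma cr_smul (r : ℝ) (w a : E3) : cr (r • w) a = r • cr w a := by
  ext i
  fin_cases i <;> simp [cr, ofv] <;> ring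

lemma inner_cr_cr_self (a v : E3) :
    (inner ℝ (cr a v) (cr a v) : ℝ) = (inner ℝ a a : ℝ) * (inner ℝ v v : ℝ) - (inner ℝ a v : ℝ)^2 := by
  simp only [inner3]; simp [inner3, Fin.sum_univ_three, cr_apply0, cr_apply1, cr_apply2]; ring

lemma norm_eq_sqrt_inner' (x : E3) : ‖x‖ = Real.sqrt (inner ℝ x x : ℝ) := by
  rw [real_inner_self_eq_norm_sq, Real.sqrt_sq (norm_nonneg x)]

lemma arccos_anti {x y : ℝ} (h : x ≤ y) : Real.arccos y ≤ Real.arccos x := by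
  simp only [Real.arccos_eq_pi_div_two_sub_arcsin]
  have := Real.monotone_arcsin h
  linarith

lemma aux_cs (a x v : E3) (haa : (inner ℝ a a : ℝ) = 1) :
    (inner ℝ x v : ℝ) ≤ (inner ℝ a x : ℝ) * (inner ℝ a v : ℝ) +
      Real.sqrt ((inner ℝ x x : ℝ) - (inner ℝ a x : ℝ)^2) *
      Real.sqrt ((inner ℝ v v : ℝ) - (inner ℝ a v : ℝ)^2) := by
  set p := x - (inner ℝ a x : ℝ) • a with hp
  set q := v - (inner ℝ a v : ℝ) • a with hq
  have hpp : (inner ℝ p p : ℝ) = (inner ℝ x x : ℝ) - (inner ℝ a x : ℝ)^2 := by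
    simp only [hp, inner_sub_left, inner_sub_right, real_inner_smul_left, real_inner_smul_right,
      haa, real_inner_comm x a]
    ring
  have hqq : (inner ℝ q q : ℝ) = (inner ℝ v v : ℝ) - (inner ℝ a v : ℝ)^2 := by
    simp only [hq, inner_sub_left, inner_sub_right, real_inner_smul_left, real_inner_smul_right,
      haa, real_inner_comm v a]
    ring
  have hpq : (inner ℝ p q : ℝ) = (inner ℝ x v : ℝ) - (inner ℝ a x : ℝ) * (inner ℝ a v : ℝ) := by
    simp only [hp, hq, inner_sub_left, inner_sub_right, real_inner_smul_left,
      real_inner_smul_right, haa, real_inner_comm x a, real_inner_comm v a]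
    ring
  have h1 : (inner ℝ p q : ℝ) ≤ ‖p‖ * ‖q‖ := real_inner_le_norm p q
  rw [norm_eq_sqrt_inner' p, norm_eq_sqrt_inner' q, hpp, hqq, hpq] at h1
  linarith

end S10

open S10 in
/-- closed form for the maximal inner product ⟨Exp(θw)a, v⟩ over
θ ∈ [0,θ'] and unit axes w. -/
theorem stmt_10 (θ' : ℝ) (hθ' : θ' ∈ Set.Icc 0 Real.pi) (a v : E3) (ha : ‖a‖ = 1)
    (α : ℝ) (hα : α = Real.arccos ((inner ℝ a v : ℝ) / (‖a‖ * ‖v‖))) :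
    IsGreatest
      {x : ℝ | ∃ θ ∈ Set.Icc 0 θ', ∃ w : E3, ‖w‖ = 1 ∧
        x = inner ℝ (ofv ((rod θ w).mulVec (tv a))) v}
      (if α ≤ θ' then ‖v‖ else ‖v‖ * Real.cos (α - θ')) := by
  obtain ⟨hθ'0, hθ'π⟩ := hθ'
  have hn0 : (0:ℝ) ≤ ‖v‖ := norm_nonneg v
  have haa : (inner ℝ a a : ℝ) = 1 := by rw [real_inner_self_eq_norm_sq, ha]; norm_num
  have hvv : (inner ℝ v v : ℝ) = ‖v‖^2 := real_inner_self_eq_norm_sq v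
  set n := ‖v‖ with hn
  set t := (inner ℝ a v : ℝ) with ht
  have hCS : |t| ≤ n := by
    have := abs_real_inner_le_norm a v
    rwa [ha, one_mul] at this
  have hα' : α = Real.arccos (t / n) := by rw [hα, ha, one_mul]
  have hα0 : 0 ≤ α := hα' ▸ Real.arccos_nonneg _
  have hαπ : α ≤ Real.pi := hα' ▸ Real.arccos_le_pi _
  have hcosα : n * Real.cos α = t := by
    rcases eq_or_lt_of_le hn0 with h0 | h0
    · have hv0 : v = 0 := by rwa [eq_comm, hn, norm_eq_zero] at h0
      rw [← h0, zero_mul, ht, hv0, inner_zero_right]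
    · have hb1 : -1 ≤ t / n := by
        rw [le_div_iff₀ h0]
        have := neg_abs_le t
        linarith
      have hb2 : t / n ≤ 1 := by
        rw [div_le_one h0]
        have := le_abs_self t
        linarith
      rw [hα', Real.cos_arccos hb1 hb2]
      field_simp
  have hsinα : n * Real.sin α = Real.sqrt (n^2 - t^2) := by
    rcases eq_or_lt_of_le hn0 with h0 | h0
    · have hv0 : v = 0 := by rwa [eq_comm, hn, norm_eq_zero] at h0
      have ht0 : t = 0 := by simp [ht, hv0]
      rw [← h0, ht0]
      norm_num
    · rw [hα', Real.sin_arccos]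
      rw [← Real.sqrt_sq hn0, ← Real.sqrt_mul (sq_nonneg n)]
      rw [Real.sqrt_sq hn0]
      congr 1
      field_simp
  constructor
  · -- membership
    by_cases hv : v = 0
    · refine ⟨0, ⟨le_refl 0, hθ'0⟩, EuclideanSpace.single 0 (1:ℝ), ?_, ?_⟩
      · simp [EuclideanSpace.norm_single]
      · simp [hv, hn]
    · have hnpos : 0 < n := by rwa [hn, norm_pos_iff]
      by_cases hdeg : n^2 - t^2 = 0
      · -- t = n or t = -n
        rcases (by
          have : (n - t) * (n + t) = 0 := by linear_combination hdeg
          rcases mul_eq_zero.1 this with h | h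
          · exact Or.inl (by linarith)
          · exact Or.inr (by linarith) : t = n ∨ t = -n) with htn | htn
        · -- α = 0
          have hα00 : α = 0 := by
            rw [hα', htn, div_self (ne_of_gt hnpos), Real.arccos_one]
          refine ⟨0, ⟨le_refl 0, hθ'0⟩, EuclideanSpace.single 0 (1:ℝ), ?_, ?_⟩
          · simp [EuclideanSpace.norm_single]
          · have hone : rod 0 (EuclideanSpace.single 0 (1:ℝ)) = 1 := by
              simp [rod]
            rw [hone, Matrix.one_mulVec]
            have : ofv (tv a) = a := rfl
            rw [this, ← ht, htn, hα00]
            simp [hθ'0]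
        · -- α = π, v = t • a
          have hαpi : α = Real.pi := by
            rw [hα', htn, neg_div, div_self (ne_of_gt hnpos), Real.arccos_neg_one]
          have hva : v = t • a := by
            have hva2 : (inner ℝ v a : ℝ) = t := by rw [ht]; exact (real_inner_comm v a).symm
            have hz : (inner ℝ (v - t • a) (v - t • a) : ℝ) = 0 := by
              simp only [inner_sub_left, inner_sub_right, real_inner_smul_left,
                real_inner_smul_right, haa, hva2, ← ht, hvv]
              linear_combination hdeg
            have := inner_self_eq_zero.1 hz
            rw [sub_eq_zero] at this
            exact this
          -- find unit w orthogonal to a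
          have ha0 : a ≠ 0 := by
            intro h; rw [h] at ha; simp at ha
          haveI : Fact (Module.finrank ℝ E3 = 2 + 1) := ⟨by simp⟩
          have hfr : Module.finrank ℝ ((ℝ ∙ a)ᗮ) = 2 := Submodule.finrank_orthogonal_span_singleton ha0
          obtain ⟨w₀, hw₀⟩ : ∃ x : ((ℝ ∙ a)ᗮ : Submodule ℝ E3), x ≠ 0 :=
            Module.finrank_pos_iff_exists_ne_zero.1 (by rw [hfr]; norm_num)
          have hw₀ne : (w₀ : E3) ≠ 0 := fun h => hw₀ (Subtype.ext h)
          have hw₀a : (inner ℝ a (w₀ : E3) : ℝ) = 0 :=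
            Submodule.mem_orthogonal_singleton_iff_inner_right.1 w₀.2
          set w : E3 := ‖(w₀ : E3)‖⁻¹ • (w₀ : E3) with hw
          have hwnorm : ‖w‖ = 1 := by
            rw [hw, norm_smul, norm_inv, norm_norm,
              inv_mul_cancel₀ (norm_ne_zero_iff.2 hw₀ne)]
          have hwa : (inner ℝ w a : ℝ) = 0 := by
            rw [hw, real_inner_smul_left, real_inner_comm, hw₀a, mul_zero]
          have hww : (inner ℝ w w : ℝ) = 1 := by
            rw [real_inner_self_eq_norm_sq, hwnorm]; norm_num
          refine ⟨θ', ⟨hθ'0, le_refl θ'⟩, w, hwnorm, ?_⟩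
          have hcompute : (inner ℝ (ofv ((rod θ' w).mulVec (tv a))) v : ℝ) = t * Real.cos θ' := by
            rw [rod_mulVec, cr_cr, hwa, hww, hva]
            simp only [inner_add_left, real_inner_smul_left, real_inner_smul_right,
              inner_sub_left, zero_smul, one_smul, zero_sub, inner_neg_left,
              inner_cr_right, haa]
            ring
          rw [hcompute]
          by_cases hc2 : α ≤ θ'
          · rw [if_pos hc2]
            have hθπ : θ' = Real.pi := le_antisymm hθ'π (hαpi ▸ hc2)
            rw [hθπ, Real.cos_pi, htn]
            ring
          · rw [if_neg hc2, hαpi, Real.cos_pi_sub, htn]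
            ring
      · -- generic case : 0 < n^2 - t^2
        have ht2 : t^2 ≤ n^2 := by
          calc t^2 = |t|^2 := (sq_abs t).symm
            _ ≤ n^2 := pow_le_pow_left₀ (abs_nonneg t) hCS 2
        have hdeg' : 0 < n^2 - t^2 := lt_of_le_of_ne (by linarith) (Ne.symm hdeg)
        have hga : (inner ℝ (cr a v) a : ℝ) = 0 := inner_cr_left a v
        have hgg : (inner ℝ (cr a v) (cr a v) : ℝ) = n^2 - t^2 := by
          rw [inner_cr_cr_self, haa, hvv, ← ht]; ring
        have hgne : cr a v ≠ 0 := by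
          intro h
          rw [h, inner_zero_left] at hgg
          linarith
        set ng := ‖cr a v‖ with hng
        have hngpos : 0 < ng := norm_pos_iff.2 hgne
        have hng2 : ng^2 = n^2 - t^2 := by
          rw [hng, ← real_inner_self_eq_norm_sq, hgg]
        set w : E3 := ng⁻¹ • cr a v with hw
        have hwnorm : ‖w‖ = 1 := by
          rw [hw, norm_smul, norm_inv, norm_norm, inv_mul_cancel₀ hngpos.ne']
        have hwa : (inner ℝ w a : ℝ) = 0 := by
          rw [hw, real_inner_smul_left, hga, mul_zero]
        have hww : (inner ℝ w w : ℝ) = 1 := by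
          rw [real_inner_self_eq_norm_sq, hwnorm]; norm_num
        set θ₀ := min α θ' with hθ₀
        have hθ₀0 : 0 ≤ θ₀ := le_min hα0 hθ'0
        have hθ₀θ' : θ₀ ≤ θ' := min_le_right _ _
        refine ⟨θ₀, ⟨hθ₀0, hθ₀θ'⟩, w, hwnorm, ?_⟩
        have hcwav : (inner ℝ (cr w a) v : ℝ) = ng := by
          rw [hw, cr_smul, real_inner_smul_left, cr_cr', haa]
          simp only [one_smul, inner_sub_left, real_inner_smul_left, ← ht, hvv]
          rw [inv_mul_eq_iff_eq_mul₀ hngpos.ne']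
          linear_combination -hng2
        have hcompute : (inner ℝ (ofv ((rod θ₀ w).mulVec (tv a))) v : ℝ)
            = Real.cos θ₀ * t + Real.sin θ₀ * ng := by
          rw [rod_mulVec, cr_cr, hwa, hww]
          simp only [inner_add_left, real_inner_smul_left, inner_sub_left, zero_smul,
            one_smul, inner_zero_left, zero_sub, inner_neg_left, ← ht, hcwav]
          ring
        rw [hcompute]
        have hngeq : ng = n * Real.sin α := by
          rw [hsinα, ← hng2, Real.sqrt_sq hngpos.le]
        have hval : Real.cos θ₀ * t + Real.sin θ₀ * ng = n * Real.cos (α - θ₀) := by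
          rw [Real.cos_sub, ← hcosα, hngeq]
          ring
        rw [hval]
        by_cases hc2 : α ≤ θ'
        · rw [if_pos hc2]
          have hmin : θ₀ = α := min_eq_left hc2
          rw [hmin, sub_self, Real.cos_zero, mul_one]
        · rw [if_neg hc2]
          have hmin : θ₀ = θ' := min_eq_right (le_of_not_ge hc2)
          rw [hmin]
  · -- upper bound
    rintro x ⟨θ, ⟨hθ0, hθθ'⟩, w, hwnorm, rfl⟩
    have hww : (inner ℝ w w : ℝ) = 1 := by
      rw [real_inner_self_eq_norm_sq, hwnorm]; norm_num
    set c := Real.cos θ with hc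
    set s := Real.sin θ with hs
    set k := (inner ℝ w a : ℝ) with hk
    have hsc : s^2 = 1 - c^2 := by
      rw [hs, hc, Real.sin_sq]
    set r := ofv ((rod θ w).mulVec (tv a)) with hr
    have hrx : r = c • a + s • cr w a + ((1 - c) * k) • w := by
      rw [hr, rod_mulVec, cr_cr, hww, hk]
      module
    have hPP : (inner ℝ (cr w a) (cr w a) : ℝ) = 1 - k^2 := by
      rw [inner_cr_cr_self, hww, haa, ← hk]; ring
    have hPa : (inner ℝ (cr w a) a : ℝ) = 0 := inner_cr_right w a
    have hPw : (inner ℝ (cr w a) w : ℝ) = 0 := inner_cr_left w a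
    have haP : (inner ℝ a (cr w a) : ℝ) = 0 := by rw [real_inner_comm]; exact hPa
    have hwP : (inner ℝ w (cr w a) : ℝ) = 0 := by rw [real_inner_comm]; exact hPw
    have haw : (inner ℝ a w : ℝ) = k := (real_inner_comm w a).trans hk.symm
    have hrr : (inner ℝ r r : ℝ) = 1 := by
      rw [hrx]
      simp only [inner_add_left, inner_add_right, real_inner_smul_left, real_inner_smul_right,
        haa, hww, hPP, hPa, hPw, haP, hwP, haw, ← hk]
      linear_combination (1 - k^2) * hsc
    have hrnorm : ‖r‖ = 1 := by
      rw [norm_eq_sqrt_inner', hrr, Real.sqrt_one]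
    have har : (inner ℝ a r : ℝ) = c + (1 - c) * k^2 := by
      rw [hrx]
      simp only [inner_add_right, real_inner_smul_right, haa, haP, haw]
      ring
    by_cases hcase : α ≤ θ'
    · rw [if_pos hcase]
      calc (inner ℝ r v : ℝ) ≤ ‖r‖ * ‖v‖ := real_inner_le_norm r v
        _ = n := by rw [hrnorm, one_mul]
    · rw [if_neg hcase]
      push_neg at hcase
      -- u = ⟨a,r⟩ ∈ [cos θ', 1], β = arccos u ≤ θ'
      set u := (inner ℝ a r : ℝ) with hu
      have hu1 : u ≤ 1 := by
        have := real_inner_le_norm a r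
        rwa [ha, hrnorm, one_mul] at this
      have hum1 : -1 ≤ u := by
        have := abs_real_inner_le_norm a r
        rw [ha, hrnorm, one_mul] at this
        have := neg_abs_le (inner ℝ a r : ℝ)
        linarith [abs_real_inner_le_norm a r]
      have hcθ : Real.cos θ' ≤ u := by
        have h1 : Real.cos θ' ≤ c :=
          Real.cos_le_cos_of_nonneg_of_le_pi hθ0 hθ'π hθθ'
        have h2 : c ≤ u := by
          rw [har]
          nlinarith [sq_nonneg k, Real.cos_le_one θ]
        linarith
      set β := Real.arccos u with hβ
      have hβ0 : 0 ≤ β := Real.arccos_nonneg u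
      have hβθ' : β ≤ θ' := by
        have h1 : Real.arccos u ≤ Real.arccos (Real.cos θ') := S10.arccos_anti hcθ
        rwa [Real.arccos_cos hθ'0 hθ'π] at h1
      have hcosβ : Real.cos β = u := Real.cos_arccos hum1 hu1
      have hsinβ : Real.sin β = Real.sqrt (1 - u^2) := Real.sin_arccos u
      have hmain := S10.aux_cs a r v haa
      rw [← hu, ← ht, hrr, hvv] at hmain
      have hsinβ0 : 0 ≤ Real.sin β := Real.sin_nonneg_of_nonneg_of_le_pi hβ0
        (le_trans hβθ' hθ'π)
      have hkey : (inner ℝ r v : ℝ) ≤ n * Real.cos (α - β) := by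
        rw [Real.cos_sub]
        calc (inner ℝ r v : ℝ) ≤ u * t + Real.sqrt (1 - u^2) * Real.sqrt (n^2 - t^2) := hmain
          _ = Real.cos β * (n * Real.cos α) + Real.sin β * (n * Real.sin α) := by
              rw [hcosβ, hsinβ, hcosα, hsinα]
          _ = n * (Real.cos α * Real.cos β + Real.sin α * Real.sin β) := by ring
      have hfin : Real.cos (α - β) ≤ Real.cos (α - θ') := by
        apply Real.cos_le_cos_of_nonneg_of_le_pi
        · linarith
        · linarith
        · linarith
      calc (inner ℝ r v : ℝ) ≤ n * Real.cos (α - β) := hkey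
        _ ≤ n * Real.cos (α - θ') := mul_le_mul_of_nonneg_left hfin hn0
end
end

section
/- Let s₁ ≤ s₂ ≤ ... ≤ s_L be real numbers, δ ∈ (0,1), and define C = s_p where p = ⌈(1−δ)(L+1)⌉, with the convention C = +∞ if p > L. If s₀, s₁, ..., s_L are exchangeable real random variables, then Prob(s₀ ≤ C(s₁,...,s_L)) ≥ 1 − δ, where C(s₁,...,s_L) is the p-th order statistic of the augmented sample (s₁,...,s_L,+∞). -/
open MeasureTheory

noncomputable section

open Finset
open scoped ENNReal

/-- The `p`-th smallest value of `f : Fin L → ℝ` (1-indexed): the least `t` such that at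
least `p` of the values are `≤ t`. -/
def orderStat (L : ℕ) (f : Fin L → ℝ) (p : ℕ) : ℝ :=
  sInf {t : ℝ | p ≤ (Finset.univ.filter fun i => f i ≤ t).card}

lemma le_orderStat_iff {L p : ℕ} (hp1 : 1 ≤ p) (hpL : p ≤ L) (f : Fin L → ℝ) (x : ℝ) :
    x ≤ orderStat L f p ↔ (Finset.univ.filter fun i => f i < x).card < p := by
  have hL : 0 < L := lt_of_lt_of_le hp1 hpL
  have hne : (Finset.univ.image f).Nonempty := by
    simpa using Finset.univ_nonempty_iff.2 (Fin.pos_iff_nonempty.mp hL)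
  set S := {t : ℝ | p ≤ (Finset.univ.filter fun i => f i ≤ t).card} with hS
  have hSne : S.Nonempty := by
    refine ⟨(Finset.univ.image f).max' hne, ?_⟩
    have : (Finset.univ.filter fun i => f i ≤ (Finset.univ.image f).max' hne) = Finset.univ := by
      apply Finset.filter_true_of_mem
      intro i _
      exact Finset.le_max' _ _ (Finset.mem_image_of_mem f (Finset.mem_univ i))
    simp [hS, this, hpL]
  have hSbdd : BddBelow S := by
    refine ⟨(Finset.univ.image f).min' hne, fun t ht => ?_⟩
    have hnef : (Finset.univ.filter fun i => f i ≤ t).Nonempty := by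
      rw [← Finset.card_pos]; exact lt_of_lt_of_le hp1 ht
    obtain ⟨i, hi⟩ := hnef
    simp only [Finset.mem_filter] at hi
    exact le_trans (Finset.min'_le _ _ (Finset.mem_image_of_mem f (Finset.mem_univ i))) hi.2
  constructor
  · intro hx
    by_contra h
    push_neg at h
    have hAne : (Finset.univ.filter fun i => f i < x).Nonempty := by
      rw [← Finset.card_pos]; exact lt_of_lt_of_le hp1 h
    set t := (Finset.univ.filter fun i => f i < x).sup' hAne f with ht
    have htx : t < x := by
      rw [ht, Finset.sup'_lt_iff]
      intro i hi; exact (Finset.mem_filter.mp hi).2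
    have htS : t ∈ S := by
      refine le_trans h (Finset.card_le_card ?_)
      intro i hi
      simp only [Finset.mem_filter, Finset.mem_univ, true_and] at hi ⊢
      exact Finset.le_sup' f (Finset.mem_filter.mpr ⟨Finset.mem_univ i, hi⟩)
    have := csInf_le hSbdd htS
    exact absurd (le_trans hx this) (not_le.mpr htx)
  · intro h
    refine le_csInf hSne fun t ht => ?_
    by_contra h'
    push_neg at h'
    have hsub : (Finset.univ.filter fun i => f i ≤ t) ⊆ (Finset.univ.filter fun i => f i < x) := by
      intro i hi
      simp only [Finset.mem_filter, Finset.mem_univ, true_and] at hi ⊢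
      exact lt_of_le_of_lt hi h'
    exact absurd (le_trans ht (Finset.card_le_card hsub)) (not_le.mpr h)

lemma card_high_rank_le (n p : ℕ) (g : Fin n → ℝ) :
    (Finset.univ.filter fun j => p ≤ (Finset.univ.filter fun i => g i < g j).card).card ≤ n - p := by
  by_cases hp : p ≤ n
  · set σ := Tuple.sort g with hσ
    have hmono := Tuple.monotone_sort g
    set Lo := Finset.univ.filter fun j => (Finset.univ.filter fun i => g i < g j).card < p with hLo
    have hLocard : p ≤ Lo.card := by
      have : ((Finset.univ : Finset (Fin p)).card : ℕ) ≤ Lo.card := by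
        apply Finset.card_le_card_of_injOn (fun k : Fin p => σ (Fin.castLE hp k))
        · intro k _
          simp only [hLo, Finset.mem_coe, Finset.mem_filter, Finset.mem_univ, true_and]
          have h1 : (Finset.univ.filter fun i => g i < g (σ (Fin.castLE hp k)))
              = (Finset.univ.filter fun m => g (σ m) < g (σ (Fin.castLE hp k))).image σ := by
            ext i
            simp only [Finset.mem_filter, Finset.mem_univ, true_and, Finset.mem_image]
            constructor
            · intro h; exact ⟨σ.symm i, by simpa using h, by simp⟩
            · rintro ⟨m, hm, rfl⟩; exact hm
          rw [h1, Finset.card_image_of_injective _ σ.injective]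
          have h2 : (Finset.univ.filter fun m => g (σ m) < g (σ (Fin.castLE hp k)))
              ⊆ Finset.univ.filter fun m => m < Fin.castLE hp k := by
            intro m hm
            simp only [Finset.mem_filter, Finset.mem_univ, true_and] at hm ⊢
            by_contra hmk
            push_neg at hmk
            exact absurd (hmono hmk) (not_le.mpr hm)
          calc (Finset.univ.filter fun m => g (σ m) < g (σ (Fin.castLE hp k))).card
              ≤ (Finset.univ.filter fun m => m < Fin.castLE hp k).card := Finset.card_le_card h2
            _ = (Finset.Iio (Fin.castLE hp k)).card := by
                congr 1; ext m; simp [Finset.mem_Iio]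
            _ = (k : ℕ) := by rw [Fin.card_Iio]; rfl
            _ < p := k.2
        · intro a _ b _ hab
          have := σ.injective hab
          exact Fin.castLE_injective hp (by exact this)
      simpa using this
    have hsplit := Finset.card_filter_add_card_filter_not
      (s := (Finset.univ : Finset (Fin n)))
      (p := fun j => (Finset.univ.filter fun i => g i < g j).card < p)
    have hcompl : (Finset.univ.filter fun j => ¬ (Finset.univ.filter fun i => g i < g j).card < p)
        = Finset.univ.filter fun j => p ≤ (Finset.univ.filter fun i => g i < g j).card := by
      simp [not_lt]
    rw [hcompl] at hsplit
    simp only [Finset.card_univ, Fintype.card_fin] at hsplit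
    rw [hLo] at hLocard
    omega
  · have : (Finset.univ.filter fun j => p ≤ (Finset.univ.filter fun i => g i < g j).card) = ∅ := by
      apply Finset.filter_false_of_mem
      intro j _
      push_neg
      calc (Finset.univ.filter fun i => g i < g j).card ≤ n := by
            simpa using Finset.card_filter_le Finset.univ (fun i => g i < g j)
        _ < p := lt_of_not_ge hp
    simp [this]

lemma card_filter_comp_perm {n : ℕ} (σ : Equiv.Perm (Fin n)) (P : Fin n → Prop) [DecidablePred P] :
    (Finset.univ.filter fun i => P (σ i)).card = (Finset.univ.filter fun i => P i).card := by
  apply Finset.card_bij' (fun i _ => σ i) (fun i _ => σ.symm i) <;> simp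

lemma measurable_rankcard {α : Type*} [MeasurableSpace α] {n : ℕ} (g : Fin n → α → ℝ)
    (h : ∀ i, Measurable (g i)) (x : α → ℝ) (hx : Measurable x) :
    Measurable fun a => (Finset.univ.filter fun i => g i a < x a).card := by
  have : (fun a => (Finset.univ.filter fun i => g i a < x a).card)
      = fun a => ∑ i : Fin n, if g i a < x a then 1 else 0 := by
    ext a; rw [Finset.card_filter]
  rw [this]
  exact Finset.measurable_sum _ fun i _ =>
    Measurable.ite (measurableSet_lt (h i) hx) measurable_const measurable_const

/-- marginal coverage guarantee of split conformal prediction. If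
`s 0, …, s L` are exchangeable, then with probability at least `1 − δ`, `s 0` is below
the `p`-th order statistic of `s 1, …, s L, +∞`, where `p = ⌈(1−δ)(L+1)⌉` (the bound
being `+∞`, i.e. vacuous, when `p > L`). -/
theorem stmt_11 (L : ℕ) (δ : ℝ) (hδ : δ ∈ Set.Ioo (0 : ℝ) 1)
    {Ω : Type*} [MeasurableSpace Ω] (μ : Measure Ω) [IsProbabilityMeasure μ]
    (s : Fin (L + 1) → Ω → ℝ) (hmeas : ∀ i, Measurable (s i))
    (hexch : ∀ σ : Equiv.Perm (Fin (L + 1)),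
      μ.map (fun ω i => s (σ i) ω) = μ.map (fun ω i => s i ω)) :
    1 - ENNReal.ofReal δ ≤
      μ {ω | ⌈(1 - δ) * (L + 1 : ℝ)⌉₊ ≤ L →
          s 0 ω ≤ orderStat L (fun i => s i.succ ω) ⌈(1 - δ) * (L + 1 : ℝ)⌉₊} := by
  obtain ⟨hδ0, hδ1⟩ := hδ
  set p := ⌈(1 - δ) * (L + 1 : ℝ)⌉₊ with hpdef
  by_cases hpL : p ≤ L
  swap
  · have hset : {ω | p ≤ L → s 0 ω ≤ orderStat L (fun i => s i.succ ω) p} = Set.univ := by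
      ext ω; simp [hpL]
    rw [hset, measure_univ]
    exact tsub_le_self
  have hp1 : 1 ≤ p := by
    rw [hpdef]
    exact Nat.ceil_pos.mpr (mul_pos (by linarith) (by positivity))
  have hpL1 : p ≤ L + 1 := by omega
  classical
  set E : Fin (L + 1) → Set Ω :=
    fun j => {ω | p ≤ (Finset.univ.filter fun i => s i ω < s j ω).card} with hEdef
  have hEmeas : ∀ j, MeasurableSet (E j) := by
    intro j
    exact (measurable_rankcard s hmeas (s j) (hmeas j)) measurableSet_Ici
  set A : Fin (L + 1) → Set (Fin (L + 1) → ℝ) :=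
    fun j => {v | p ≤ (Finset.univ.filter fun i => v i < v j).card} with hAdef
  have hAmeas : ∀ j, MeasurableSet (A j) := by
    intro j
    exact (measurable_rankcard (fun i (v : Fin (L + 1) → ℝ) => v i) (fun i => measurable_pi_apply i)
      (fun v : Fin (L + 1) → ℝ => v j) (measurable_pi_apply j)) measurableSet_Ici
  have hJ : Measurable (fun ω i => s i ω) := measurable_pi_lambda _ hmeas
  have hmapeq : ∀ j, μ (E j) = μ (E 0) := by
    intro j
    set σ := Equiv.swap (0 : Fin (L + 1)) j with hσdef
    have hσm : Measurable (fun ω i => s (σ i) ω) := measurable_pi_lambda _ fun i => hmeas _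
    have h1 : E j = (fun ω i => s (σ i) ω) ⁻¹' A 0 := by
      ext ω
      simp only [hEdef, hAdef, Set.mem_preimage, Set.mem_setOf_eq, Equiv.swap_apply_left, hσdef]
      rw [card_filter_comp_perm (Equiv.swap 0 j) (fun i => s i ω < s j ω)]
    calc μ (E j) = μ.map (fun ω i => s (σ i) ω) (A 0) := by
          rw [Measure.map_apply hσm (hAmeas 0), h1]
      _ = μ.map (fun ω i => s i ω) (A 0) := by rw [hexch σ]
      _ = μ (E 0) := by
          rw [Measure.map_apply hJ (hAmeas 0)]; rfl
  have hsum : ((L + 1 : ℕ) : ℝ≥0∞) * μ (E 0) ≤ ((L + 1 - p : ℕ) : ℝ≥0∞) := by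
    have h1 : ∑ j : Fin (L + 1), μ (E j) = ((L + 1 : ℕ) : ℝ≥0∞) * μ (E 0) := by
      rw [Finset.sum_congr rfl (fun j _ => hmapeq j), Finset.sum_const, Finset.card_univ,
        Fintype.card_fin, nsmul_eq_mul]
    rw [← h1]
    have hpt : ∀ ω, ∑ j : Fin (L + 1), (E j).indicator (fun _ => (1 : ℝ≥0∞)) ω
        ≤ ((L + 1 - p : ℕ) : ℝ≥0∞) := by
      intro ω
      have heq : ∑ j : Fin (L + 1), (E j).indicator (fun _ => (1 : ℝ≥0∞)) ω
          = ((Finset.univ.filter fun j =>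
              p ≤ (Finset.univ.filter fun i => s i ω < s j ω).card).card : ℝ≥0∞) := by
        rw [Finset.card_filter]
        push_cast
        apply Finset.sum_congr rfl
        intro j _
        by_cases h : p ≤ (Finset.univ.filter fun i => s i ω < s j ω).card <;>
          simp [hEdef, Set.indicator_apply, Set.mem_setOf_eq, h]
      rw [heq]
      exact_mod_cast Nat.cast_le.mpr (card_high_rank_le (L + 1) p (fun i => s i ω))
    calc ∑ j : Fin (L + 1), μ (E j)
        = ∑ j : Fin (L + 1), ∫⁻ ω, (E j).indicator (fun _ => (1 : ℝ≥0∞)) ω ∂μ := by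
          exact Finset.sum_congr rfl fun j _ => (lintegral_indicator_one (hEmeas j)).symm
      _ = ∫⁻ ω, ∑ j : Fin (L + 1), (E j).indicator (fun _ => (1 : ℝ≥0∞)) ω ∂μ :=
          (lintegral_finset_sum _ fun j _ => measurable_one.indicator (hEmeas j)).symm
      _ ≤ ∫⁻ _, ((L + 1 - p : ℕ) : ℝ≥0∞) ∂μ := lintegral_mono hpt
      _ = ((L + 1 - p : ℕ) : ℝ≥0∞) := by simp
  have hcast : ((L + 1 - p : ℕ) : ℝ≥0∞) ≤ ENNReal.ofReal δ * ((L + 1 : ℕ) : ℝ≥0∞) := by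
    have hle := Nat.le_ceil ((1 - δ) * (L + 1 : ℝ))
    rw [← hpdef] at hle
    have hr : ((L + 1 - p : ℕ) : ℝ) ≤ δ * ((L + 1 : ℕ) : ℝ) := by
      rw [Nat.cast_sub hpL1]
      push_cast
      nlinarith
    calc ((L + 1 - p : ℕ) : ℝ≥0∞) = ENNReal.ofReal ((L + 1 - p : ℕ) : ℝ) := by
          rw [ENNReal.ofReal_natCast]
      _ ≤ ENNReal.ofReal (δ * ((L + 1 : ℕ) : ℝ)) := ENNReal.ofReal_le_ofReal hr
      _ = ENNReal.ofReal δ * ENNReal.ofReal ((L + 1 : ℕ) : ℝ) :=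
          ENNReal.ofReal_mul (le_of_lt hδ0)
      _ = ENNReal.ofReal δ * ((L + 1 : ℕ) : ℝ≥0∞) := by rw [ENNReal.ofReal_natCast]
  have hE0 : μ (E 0) ≤ ENNReal.ofReal δ := by
    have h := le_trans hsum hcast
    rw [mul_comm ((L + 1 : ℕ) : ℝ≥0∞) (μ (E 0))] at h
    exact (ENNReal.mul_le_mul_iff_left (by exact_mod_cast Nat.succ_ne_zero L)
      (ENNReal.natCast_ne_top _)).mp h
  have hcard0 : ∀ ω, (Finset.univ.filter fun i : Fin L => s i.succ ω < s 0 ω).card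
      = (Finset.univ.filter fun i : Fin (L + 1) => s i ω < s 0 ω).card := by
    intro ω
    rw [Finset.card_filter, Finset.card_filter, Fin.sum_univ_succ]
    simp
  have hset : {ω | p ≤ L → s 0 ω ≤ orderStat L (fun i => s i.succ ω) p} = (E 0)ᶜ := by
    ext ω
    simp only [Set.mem_setOf_eq, Set.mem_compl_iff, hpL, true_implies, hEdef, not_le]
    rw [le_orderStat_iff hp1 hpL, hcard0 ω]
  rw [hset, prob_compl_eq_one_sub (hEmeas 0)]
  exact tsub_le_tsub_left hE0 1
end
end

section
/- Let 𝒯_r = {T ∈ SE(3) : A₂(R s + t) ≤ b₂ + r·𝟏} where s is the Chebyshev center and r the Chebyshev radius of a polytope P(A₁,b₁) ⊆ ℝ³, and A₂ has unit-vector rows. Then 𝒯_r contains the set 𝒯 = {T ∈ SE(3) : ∃ p ∈ P(A₁,b₁), ∃ q ∈ P(A₂,b₂) with q = Rp + t}. -/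
open Matrix Set MeasureTheory Pointwise

noncomputable section

lemma aux_dot (R : Matrix (Fin 3) (Fin 3) ℝ) (hR : R.transpose * R = 1)
    (x : Fin 3 → ℝ) : R.mulVec x ⬝ᵥ R.mulVec x = x ⬝ᵥ x := by
  rw [Matrix.dotProduct_mulVec, ← Matrix.mulVec_transpose, Matrix.mulVec_mulVec, hR,
    Matrix.one_mulVec]

lemma aux_inner (x y : E3) : (inner ℝ x y : ℝ) = tv x ⬝ᵥ tv y := by
  simp [PiLp.inner_apply, tv, dotProduct, RCLike.inner_apply, mul_comm]

lemma aux_norm (R : Matrix (Fin 3) (Fin 3) ℝ) (hR : R.transpose * R = 1)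
    (x : E3) : ‖ofv (R.mulVec (tv x))‖ = ‖x‖ := by
  have h1 : ‖ofv (R.mulVec (tv x))‖ ^ 2 = ‖x‖ ^ 2 := by
    rw [← real_inner_self_eq_norm_sq, ← real_inner_self_eq_norm_sq, aux_inner, aux_inner]
    have : tv (ofv (R.mulVec (tv x))) = R.mulVec (tv x) := rfl
    rw [this, aux_dot R hR]
  calc ‖ofv (R.mulVec (tv x))‖ = Real.sqrt (‖ofv (R.mulVec (tv x))‖ ^ 2) :=
        (Real.sqrt_sq (norm_nonneg _)).symm
    _ = Real.sqrt (‖x‖ ^ 2) := by rw [h1]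
    _ = ‖x‖ := Real.sqrt_sq (norm_nonneg _)

/-- the Chebyshev-radius backward enclosure 𝒯_r contains the exact
feasible pose set 𝒯. -/
theorem stmt_12 (M₁ M₂ : ℕ)
    (A₁ : Fin M₁ → E3) (b₁ : Fin M₁ → ℝ)
    (A₂ : Fin M₂ → E3) (b₂ : Fin M₂ → ℝ) (hA₂ : ∀ m, ‖A₂ m‖ = 1)
    (s : E3) (r : ℝ)
    (hcheb : ∀ p : E3, (∀ m, (inner ℝ (A₁ m) p : ℝ) ≤ b₁ m) → ‖s - p‖ ≤ r) :
    {T : Pose | isSO3 T.1 ∧ ∃ p : E3, (∀ m, (inner ℝ (A₁ m) p : ℝ) ≤ b₁ m) ∧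
        ∃ q : E3, (∀ m, (inner ℝ (A₂ m) q : ℝ) ≤ b₂ m) ∧ q = act T p} ⊆
      {T : Pose | isSO3 T.1 ∧ ∀ m, (inner ℝ (A₂ m) (act T s) : ℝ) ≤ b₂ m + r} := by
  rintro T ⟨hSO, p, hp, q, hq, hqe⟩
  refine ⟨hSO, fun m => ?_⟩
  have hnorm : ‖act T s - q‖ ≤ r := by
    have he : act T s - q = ofv (T.1.mulVec (tv (s - p))) := by
      rw [hqe]
      show ofv (T.1.mulVec (tv s)) + T.2 - (ofv (T.1.mulVec (tv p)) + T.2) = _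
      have : tv (s - p) = tv s - tv p := rfl
      rw [this, Matrix.mulVec_sub]
      have : ofv (T.1.mulVec (tv s) - T.1.mulVec (tv p))
          = ofv (T.1.mulVec (tv s)) - ofv (T.1.mulVec (tv p)) := rfl
      rw [this]; abel
    rw [he, aux_norm T.1 hSO.1]
    exact hcheb p hp
  have h1 : (inner ℝ (A₂ m) (act T s) : ℝ)
      = inner ℝ (A₂ m) q + inner ℝ (A₂ m) (act T s - q) := by
    rw [← inner_add_right]
    congr 1
    abel
  rw [h1]
  have h2 : (inner ℝ (A₂ m) (act T s - q) : ℝ) ≤ ‖A₂ m‖ * ‖act T s - q‖ :=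
    real_inner_le_norm _ _
  rw [hA₂ m, one_mul] at h2
  exact add_le_add (hq m) (h2.trans hnorm)
end
end

section
/- Let 𝒳₁ = {X ∈ SO(3) : dis(X,I) ≤ θ₁'}, let P₂ ⊆ ℝ³ be a polytope with vertex set V₂, let R̄₁ ∈ SO(3), and let A have unit rows a_m. Define b_m = max_{v∈V₂} max_{θ∈[0,θ₁'], w unit} ⟨Exp(θw)a_m, v⟩. Then the set R̄₁𝒳₁·P₂ = {R̄₁ X t₂ : X ∈ 𝒳₁, t₂ ∈ P₂} is contained in the polytope {y : A R̄₁ᵀ y ≤ b}. -/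
open Matrix Set MeasureTheory Pointwise

noncomputable section

lemma norm_one_of_sq (w : E3) (h : tv w 0 ^ 2 + tv w 1 ^ 2 + tv w 2 ^ 2 = 1) : ‖w‖ = 1 := by
  have h2 : (inner ℝ w w : ℝ) = ‖w‖ ^ 2 := real_inner_self_eq_norm_sq w
  have h3 : (inner ℝ w w : ℝ) = tv w 0 ^ 2 + tv w 1 ^ 2 + tv w 2 ^ 2 := by
    simp only [PiLp.inner_apply, Fin.sum_univ_three, RCLike.inner_apply, tv, conj_trivial, WithLp.equiv_apply]; ring
  nlinarith [norm_nonneg w]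

lemma sqz {a : ℝ} (h : a ^ 2 ≤ 0) : a = 0 :=
  sq_eq_zero_iff.mp (le_antisymm h (sq_nonneg a))

lemma build (X : Matrix (Fin 3) (Fin 3) ℝ) (θ : ℝ) (q0 q1 q2 : ℝ)
    (hn : q0 ^ 2 + q1 ^ 2 + q2 ^ 2 = 1)
    (h00 : X 0 0 = 1 + (1 - Real.cos θ) * (-(q1 * q1) - q2 * q2))
    (h01 : X 0 1 = Real.sin θ * (-q2) + (1 - Real.cos θ) * (q0 * q1))
    (h02 : X 0 2 = Real.sin θ * q1 + (1 - Real.cos θ) * (q0 * q2))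
    (h10 : X 1 0 = Real.sin θ * q2 + (1 - Real.cos θ) * (q0 * q1))
    (h11 : X 1 1 = 1 + (1 - Real.cos θ) * (-(q0 * q0) - q2 * q2))
    (h12 : X 1 2 = Real.sin θ * (-q0) + (1 - Real.cos θ) * (q1 * q2))
    (h20 : X 2 0 = Real.sin θ * (-q1) + (1 - Real.cos θ) * (q0 * q2))
    (h21 : X 2 1 = Real.sin θ * q0 + (1 - Real.cos θ) * (q1 * q2))
    (h22 : X 2 2 = 1 + (1 - Real.cos θ) * (-(q0 * q0) - q1 * q1)) :
    ‖(ofv ![q0, q1, q2] : E3)‖ = 1 ∧ X = rod θ (ofv ![q0, q1, q2]) := by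
  constructor
  · apply norm_one_of_sq
    show (![q0,q1,q2] 0)^2 + (![q0,q1,q2] 1)^2 + (![q0,q1,q2] 2)^2 = 1
    simpa using hn
  · ext i j
    have e0 : tv (ofv ![q0,q1,q2] : E3) 0 = q0 := rfl
    have e1 : tv (ofv ![q0,q1,q2] : E3) 1 = q1 := rfl
    have e2 : tv (ofv ![q0,q1,q2] : E3) 2 = q2 := rfl
    fin_cases i <;> fin_cases j <;>
      simp [rod, hat, Matrix.mul_apply, Matrix.one_apply, Fin.sum_univ_three, e0, e1, e2] <;>
      first
        | linear_combination h00 | linear_combination h01 | linear_combination h02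
        | linear_combination h10 | linear_combination h11 | linear_combination h12
        | linear_combination h20 | linear_combination h21 | linear_combination h22

lemma rz1 {a b c : ℝ} (h : a * a + b * b + c * c = 1) (ha : a = 1) : b = 0 ∧ c = 0 :=
  ⟨sqz (by nlinarith [sq_nonneg c]), sqz (by nlinarith [sq_nonneg b])⟩

lemma rz2 {a b c : ℝ} (h : a * a + b * b + c * c = 1) (hb : b = 1) : a = 0 ∧ c = 0 :=
  ⟨sqz (by nlinarith [sq_nonneg c]), sqz (by nlinarith [sq_nonneg a])⟩

lemma rz3 {a b c : ℝ} (h : a * a + b * b + c * c = 1) (hc : c = 1) : a = 0 ∧ b = 0 :=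
  ⟨sqz (by nlinarith [sq_nonneg b]), sqz (by nlinarith [sq_nonneg a])⟩

lemma sos_zero {u v p : ℝ} (h : u ^ 2 + v ^ 2 + p ^ 2 = 0) : u = 0 ∧ v = 0 ∧ p = 0 :=
  ⟨sqz (by nlinarith [sq_nonneg v, sq_nonneg p]),
   sqz (by nlinarith [sq_nonneg u, sq_nonneg p]),
   sqz (by nlinarith [sq_nonneg u, sq_nonneg v])⟩

lemma argpos {T : ℝ} (h1 : -1 < T) (h2 : T < 3) : 0 < 1 - ((T - 1) / 2) ^ 2 := by nlinarith

lemma diag_le_one {a b c : ℝ} (h : a * a + b * b + c * c = 1) : a ≤ 1 := by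
  nlinarith [sq_nonneg (a - 1), sq_nonneg b, sq_nonneg c]

lemma diag_le_one2 {a b c : ℝ} (h : a * a + b * b + c * c = 1) : b ≤ 1 := by
  nlinarith [sq_nonneg (b - 1), sq_nonneg a, sq_nonneg c]

lemma diag_le_one3 {a b c : ℝ} (h : a * a + b * b + c * c = 1) : c ≤ 1 := by
  nlinarith [sq_nonneg (c - 1), sq_nonneg a, sq_nonneg b]

lemma tge {u v p T : ℝ} (h : u^2 + v^2 + p^2 = (3 - T) * (1 + T)) (h3 : T ≤ 3) : -1 ≤ T := by
  nlinarith [sq_nonneg u, sq_nonneg v, sq_nonneg p]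

set_option maxHeartbeats 1000000 in
lemma so3_rod (X : Matrix (Fin 3) (Fin 3) ℝ) (h : isSO3 X) :
    ∃ w : E3, ‖w‖ = 1 ∧ X = rod (Real.arccos ((X.trace - 1) / 2)) w := by
  obtain ⟨horth, hdet⟩ := h
  have hX : X * Xᵀ = 1 := mul_eq_one_comm.mp horth
  have hadj : X.adjugate = Xᵀ := by
    calc X.adjugate = X.adjugate * (X * Xᵀ) := by rw [hX, mul_one]
      _ = Xᵀ := by rw [← mul_assoc, Matrix.adjugate_mul, hdet, one_smul, one_mul]
  rw [Matrix.adjugate_fin_three] at hadj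
  have hc00 : X 0 0 * X 0 0 + X 1 0 * X 1 0 + X 2 0 * X 2 0 = 1 := by
    have h' := congrFun (congrFun horth 0) 0
    simpa [Matrix.mul_apply, Fin.sum_univ_three, Matrix.one_apply] using h'
  have hr00 : X 0 0 * X 0 0 + X 0 1 * X 0 1 + X 0 2 * X 0 2 = 1 := by
    have h' := congrFun (congrFun hX 0) 0
    simpa [Matrix.mul_apply, Fin.sum_univ_three, Matrix.one_apply] using h'
  have hc01 : X 0 0 * X 0 1 + X 1 0 * X 1 1 + X 2 0 * X 2 1 = 0 := by
    have h' := congrFun (congrFun horth 0) 1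
    simpa [Matrix.mul_apply, Fin.sum_univ_three, Matrix.one_apply] using h'
  have hr01 : X 0 0 * X 1 0 + X 0 1 * X 1 1 + X 0 2 * X 1 2 = 0 := by
    have h' := congrFun (congrFun hX 0) 1
    simpa [Matrix.mul_apply, Fin.sum_univ_three, Matrix.one_apply] using h'
  have hc02 : X 0 0 * X 0 2 + X 1 0 * X 1 2 + X 2 0 * X 2 2 = 0 := by
    have h' := congrFun (congrFun horth 0) 2
    simpa [Matrix.mul_apply, Fin.sum_univ_three, Matrix.one_apply] using h'
  have hr02 : X 0 0 * X 2 0 + X 0 1 * X 2 1 + X 0 2 * X 2 2 = 0 := by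
    have h' := congrFun (congrFun hX 0) 2
    simpa [Matrix.mul_apply, Fin.sum_univ_three, Matrix.one_apply] using h'
  have hc11 : X 0 1 * X 0 1 + X 1 1 * X 1 1 + X 2 1 * X 2 1 = 1 := by
    have h' := congrFun (congrFun horth 1) 1
    simpa [Matrix.mul_apply, Fin.sum_univ_three, Matrix.one_apply] using h'
  have hr11 : X 1 0 * X 1 0 + X 1 1 * X 1 1 + X 1 2 * X 1 2 = 1 := by
    have h' := congrFun (congrFun hX 1) 1
    simpa [Matrix.mul_apply, Fin.sum_univ_three, Matrix.one_apply] using h'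
  have hc12 : X 0 1 * X 0 2 + X 1 1 * X 1 2 + X 2 1 * X 2 2 = 0 := by
    have h' := congrFun (congrFun horth 1) 2
    simpa [Matrix.mul_apply, Fin.sum_univ_three, Matrix.one_apply] using h'
  have hr12 : X 1 0 * X 2 0 + X 1 1 * X 2 1 + X 1 2 * X 2 2 = 0 := by
    have h' := congrFun (congrFun hX 1) 2
    simpa [Matrix.mul_apply, Fin.sum_univ_three, Matrix.one_apply] using h'
  have hc22 : X 0 2 * X 0 2 + X 1 2 * X 1 2 + X 2 2 * X 2 2 = 1 := by
    have h' := congrFun (congrFun horth 2) 2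
    simpa [Matrix.mul_apply, Fin.sum_univ_three, Matrix.one_apply] using h'
  have hr22 : X 2 0 * X 2 0 + X 2 1 * X 2 1 + X 2 2 * X 2 2 = 1 := by
    have h' := congrFun (congrFun hX 2) 2
    simpa [Matrix.mul_apply, Fin.sum_univ_three, Matrix.one_apply] using h'
  have ha00 : X 0 0 = X 1 1 * X 2 2 - X 1 2 * X 2 1 := by
    have h' := congrFun (congrFun hadj 0) 0
    simp [Matrix.transpose_apply] at h'
    linarith [h']
  have ha01 : X 0 1 = -(X 1 0 * X 2 2) + X 1 2 * X 2 0 := by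
    have h' := congrFun (congrFun hadj 1) 0
    simp [Matrix.transpose_apply] at h'
    linarith [h']
  have ha02 : X 0 2 = X 1 0 * X 2 1 - X 1 1 * X 2 0 := by
    have h' := congrFun (congrFun hadj 2) 0
    simp [Matrix.transpose_apply] at h'
    linarith [h']
  have ha10 : X 1 0 = -(X 0 1 * X 2 2) + X 0 2 * X 2 1 := by
    have h' := congrFun (congrFun hadj 0) 1
    simp [Matrix.transpose_apply] at h'
    linarith [h']
  have ha11 : X 1 1 = X 0 0 * X 2 2 - X 0 2 * X 2 0 := by
    have h' := congrFun (congrFun hadj 1) 1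
    simp [Matrix.transpose_apply] at h'
    linarith [h']
  have ha12 : X 1 2 = -(X 0 0 * X 2 1) + X 0 1 * X 2 0 := by
    have h' := congrFun (congrFun hadj 2) 1
    simp [Matrix.transpose_apply] at h'
    linarith [h']
  have ha20 : X 2 0 = X 0 1 * X 1 2 - X 0 2 * X 1 1 := by
    have h' := congrFun (congrFun hadj 0) 2
    simp [Matrix.transpose_apply] at h'
    linarith [h']
  have ha21 : X 2 1 = -(X 0 0 * X 1 2) + X 0 2 * X 1 0 := by
    have h' := congrFun (congrFun hadj 1) 2
    simp [Matrix.transpose_apply] at h'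
    linarith [h']
  have ha22 : X 2 2 = X 0 0 * X 1 1 - X 0 1 * X 1 0 := by
    have h' := congrFun (congrFun hadj 2) 2
    simp [Matrix.transpose_apply] at h'
    linarith [h']
  have hD0 : (X 2 1 - X 1 2)^2 = (1 + (X 0 0 + X 1 1 + X 2 2)) * (1 + X 0 0 - X 1 1 - X 2 2) := by
    linear_combination ((-1)) * hr00 + (1) * hc11 + (1) * hc22 + ((-2)) * ha00
  have hD1 : (X 0 2 - X 2 0)^2 = (1 + (X 0 0 + X 1 1 + X 2 2)) * (1 - X 0 0 + X 1 1 - X 2 2) := by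
    linear_combination (1 + 2 * X 1 1) * hc00 + ((-2) * X 1 1) * hr00 + ((-2) * X 1 0) * hc01 + (2 * X 0 1) * hr01 + ((-1)) * hr11 + ((-2) * X 1 2) * hc12 + (1 + 2 * X 1 1) * hc22 + (2 * X 2 2) * ha00 + ((-2) * X 2 0) * ha02
  have hD2 : (X 1 0 - X 0 1)^2 = (1 + (X 0 0 + X 1 1 + X 2 2)) * (1 - X 0 0 - X 1 1 + X 2 2) := by
    linear_combination (2 * X 2 2) * hc00 + (1 + (-2) * X 2 2) * hr00 + ((-2) * X 2 0) * hc02 + (2 * X 0 2) * hr02 + (2 * X 2 2) * hc11 + (1) * hr11 + ((-2) * X 2 1) * hc12 + ((-1)) * hc22 + (2 * X 1 1) * ha00 + ((-2) * X 1 0) * ha01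
  have hJ01 : (X 2 1 - X 1 2) * (X 0 2 - X 2 0) = (1 + (X 0 0 + X 1 1 + X 2 2)) * (X 0 1 + X 1 0) := by
    linear_combination ((-1) * X 1 0) * hr00 + ((-1) + (-1) * X 1 1) * hc01 + ((-1) + 1 * X 0 0) * hr01 + ((-1) * X 1 2) * hc02 + (1 * X 1 0) * hc11 + (1 * X 1 0) * hc22 + ((-1) + (-1) * X 2 2) * ha01 + (1 * X 2 1) * ha02
  have hJ02 : (X 2 1 - X 1 2) * (X 1 0 - X 0 1) = (1 + (X 0 0 + X 1 1 + X 2 2)) * (X 0 2 + X 2 0) := by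
    linear_combination ((-1)) * hc02 + ((-1)) * hr02 + (1 * X 2 0) * hr11 + ((-1) * X 1 0) * hr12 + (1 * X 1 2) * ha01 + ((-1) + (-1) * X 1 1) * ha02
  have hJ12 : (X 0 2 - X 2 0) * (X 1 0 - X 0 1) = (1 + (X 0 0 + X 1 1 + X 2 2)) * (X 1 2 + X 2 1) := by
    linear_combination (1 * X 1 2) * hc00 + ((-1) * X 1 2) * hr00 + (1 * X 0 2) * hr01 + ((-1) * X 1 0) * hc02 + (1 * X 1 2) * hc11 + (1 * X 2 1) * hr11 + ((-1) + (-1) * X 1 1) * hc12 + ((-1) + (-1) * X 1 1) * hr12 + ((-1) * X 1 2 + (-1) * X 2 1) * ha00 + (1 * X 2 0) * ha01 + (1 * X 1 0) * ha02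
  have hN : (X 2 1 - X 1 2)^2 + (X 0 2 - X 2 0)^2 + (X 1 0 - X 0 1)^2
      = (3 - (X 0 0 + X 1 1 + X 2 2)) * (1 + (X 0 0 + X 1 1 + X 2 2)) := by
    linear_combination hD0 + hD1 + hD2
  have l00 : X 0 0 ≤ 1 := diag_le_one hc00
  have l11 : X 1 1 ≤ 1 := diag_le_one2 hc11
  have l22 : X 2 2 ≤ 1 := diag_le_one3 hc22
  have ht3 : X 0 0 + X 1 1 + X 2 2 ≤ 3 := by linarith
  have htm1 : -1 ≤ X 0 0 + X 1 1 + X 2 2 := tge hN ht3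
  have hTt : X.trace = X 0 0 + X 1 1 + X 2 2 := Matrix.trace_fin_three X
  have hc1 : (X.trace - 1) / 2 ≤ 1 := by rw [hTt]; linarith
  have hcm : -1 ≤ (X.trace - 1) / 2 := by rw [hTt]; linarith
  have hcos : Real.cos (Real.arccos ((X.trace - 1) / 2)) = (X.trace - 1) / 2 :=
    Real.cos_arccos hcm hc1
  have hsin : Real.sin (Real.arccos ((X.trace - 1) / 2))
      = Real.sqrt (1 - ((X.trace - 1) / 2) ^ 2) := Real.sin_arccos _
  by_cases h3 : X 0 0 + X 1 1 + X 2 2 = 3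
  · -- identity case
    have d0 : X 0 0 = 1 := by linarith
    have d1 : X 1 1 = 1 := by linarith
    have d2 : X 2 2 = 1 := by linarith
    have o01 : X 0 1 = 0 := (rz1 hr00 d0).1
    have o02 : X 0 2 = 0 := (rz1 hr00 d0).2
    have o10 : X 1 0 = 0 := (rz2 hr11 d1).1
    have o12 : X 1 2 = 0 := (rz2 hr11 d1).2
    have o20 : X 2 0 = 0 := (rz3 hr22 d2).1
    have o21 : X 2 1 = 0 := (rz3 hr22 d2).2
    have hs0 : Real.sin (Real.arccos ((X.trace - 1) / 2)) = 0 := by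
      rw [hsin, hTt, h3]; norm_num
    have hc0 : Real.cos (Real.arccos ((X.trace - 1) / 2)) = 1 := by
      rw [hcos, hTt, h3]; norm_num
    exact ⟨_, build X (Real.arccos ((X.trace - 1) / 2)) 1 0 0 (by norm_num)
      (by simp only [hs0, hc0]; linear_combination d0)
      (by simp only [hs0, hc0]; linear_combination o01)
      (by simp only [hs0, hc0]; linear_combination o02)
      (by simp only [hs0, hc0]; linear_combination o10)
      (by simp only [hs0, hc0]; linear_combination d1)
      (by simp only [hs0, hc0]; linear_combination o12)
      (by simp only [hs0, hc0]; linear_combination o20)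
      (by simp only [hs0, hc0]; linear_combination o21)
      (by simp only [hs0, hc0]; linear_combination d2)⟩
  by_cases hm : X 0 0 + X 1 1 + X 2 2 = -1
  · -- angle pi case
    have hs0 : Real.sin (Real.arccos ((X.trace - 1) / 2)) = 0 := by
      rw [hsin, hTt, hm]; norm_num
    have hcm1 : Real.cos (Real.arccos ((X.trace - 1) / 2)) = -1 := by
      rw [hcos, hTt, hm]; norm_num
    have hN0 : (X 2 1 - X 1 2)^2 + (X 0 2 - X 2 0)^2 + (X 1 0 - X 0 1)^2 = 0 := by
      linear_combination hN + (3 - (X 0 0 + X 1 1 + X 2 2)) * hm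
    obtain ⟨hS3', hS2', hS1'⟩ := sos_zero hN0
    have hS1 : X 1 0 = X 0 1 := by linarith
    have hS2 : X 0 2 = X 2 0 := by linarith
    have hS3 : X 2 1 = X 1 2 := by linarith
    have hT : X 0 0 + X 1 1 + X 2 2 = -1 := hm
    have hB1 : X 0 1 * X 0 1 = (X 0 0 + 1) * (X 1 1 + 1) := by
      linear_combination (1 * X 2 2) * hr00 + ((-1) * X 2 2) * hc00 + (1 * X 2 0) * hc02 + ((-1) * X 0 2) * hr02 + ((-1) * X 2 2) * hc11 + (1 * X 2 1) * hc12 + ((-1) * X 1 1) * ha00 + (1 * X 1 0) * ha01 + ((-1)) * hT + ((-1) * X 0 1) * hS1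
    have hB2 : X 0 2 * X 0 2 = (X 0 0 + 1) * (X 2 2 + 1) := by
      linear_combination (1 * X 2 2) * hc00 + (1 + (-1) * X 2 2) * hr00 + ((-1) * X 2 0) * hc02 + (1 * X 0 2) * hr02 + (1 * X 2 2) * hc11 + ((-1) * X 2 1) * hc12 + (1 * X 1 1) * ha00 + ((-1) * X 1 0) * ha01 + ((-1) * X 0 0) * hT + (1 * X 0 1) * hS1
    have hB3 : X 0 1 * X 0 2 = (X 0 0 + 1) * X 1 2 := by
      linear_combination (1 * X 2 1) * hr11 + ((-1) * X 1 1) * hr12 + ((-1) * X 1 2) * ha00 + (1 * X 1 0) * ha02 + ((-1) * X 0 2) * hS1 + (1) * hS3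
    have hB4 : X 1 2 * X 1 2 = (X 1 1 + 1) * (X 2 2 + 1) := by
      linear_combination ((-1) * X 2 2) * hc00 + ((-1) + 1 * X 2 2) * hr00 + (1 * X 2 0) * hc02 + ((-1) * X 0 2) * hr02 + ((-1) * X 2 2) * hc11 + (1 * X 2 1) * hc12 + (1) * hc22 + ((-1) * X 1 1) * ha00 + (1 * X 1 0) * ha01 + ((-1) + 1 * X 0 0 + (-1) * X 2 2) * hT + ((-1) * X 0 1) * hS1
    have hB5 : X 0 1 * X 1 2 = (X 1 1 + 1) * X 0 2 := by
      linear_combination (1 * X 2 0) * hr11 + ((-1) * X 1 0) * hr12 + (1 * X 1 2) * ha01 + ((-1) * X 1 1) * ha02 + ((-1)) * hS2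
    have hB6 : X 0 2 * X 1 2 = (X 2 2 + 1) * X 0 1 := by
      linear_combination (1) * hr01 + ((-1) * X 0 1) * hT + ((-1) * X 0 0) * hS1
    by_cases p0 : (-1:ℝ)/3 ≤ X 0 0
    · -- pivot 0
      have hdpos : (0:ℝ) < X 0 0 + 1 := by linarith
      have hrpos : (0:ℝ) < Real.sqrt ((X 0 0 + 1)/2) := Real.sqrt_pos.mpr (by linarith)
      set r : ℝ := Real.sqrt ((X 0 0 + 1)/2) with hrdef
      have hrne : r ≠ 0 := ne_of_gt hrpos
      have hr2 : r ^ 2 = (X 0 0 + 1)/2 := Real.sq_sqrt (by linarith)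
      have h2r : (2*r) * (2*r) = 2 * (X 0 0 + 1) := by linear_combination 4 * hr2
      have f0 : (r:ℝ) ^ 2 = (X 0 0 + 1)/2 := hr2
      have f1 : ((X 0 1 / (2*r)):ℝ) ^ 2 = (X 1 1 + 1)/2 := by
        rw [div_pow, show ((2:ℝ)*r)^2 = 2 * (X 0 0 + 1) from by linear_combination 4*hr2,
          div_eq_div_iff (by linarith) (by norm_num)]
        linear_combination 2 * hB1
      have f2 : ((X 0 2 / (2*r)):ℝ) ^ 2 = (X 2 2 + 1)/2 := by
        rw [div_pow, show ((2:ℝ)*r)^2 = 2 * (X 0 0 + 1) from by linear_combination 4*hr2,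
          div_eq_div_iff (by linarith) (by norm_num)]
        linear_combination 2 * hB2
      have g01 : 2 * ((r:ℝ) * (X 0 1 / (2*r))) = X 0 1 := by field_simp
      have g02 : 2 * ((r:ℝ) * (X 0 2 / (2*r))) = X 0 2 := by field_simp
      have g12 : 2 * (((X 0 1 / (2*r)):ℝ) * (X 0 2 / (2*r))) = X 1 2 := by
        rw [div_mul_div_comm, h2r, mul_div_assoc', div_eq_iff (by linarith)]
        linear_combination 2 * hB3
      refine ⟨_, build X (Real.arccos ((X.trace - 1) / 2)) r (X 0 1 / (2*r)) (X 0 2 / (2*r))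
            (by linear_combination f0 + f1 + f2 + (1/2) * hm)
            (by simp only [hs0, hcm1]; linear_combination 2*f1 + 2*f2 + hm)
            (by simp only [hs0, hcm1]; linear_combination -g01)
            (by simp only [hs0, hcm1]; linear_combination -g02)
            (by simp only [hs0, hcm1]; linear_combination hS1 - g01)
            (by simp only [hs0, hcm1]; linear_combination 2*f0 + 2*f2 + hm)
            (by simp only [hs0, hcm1]; linear_combination -g12)
            (by simp only [hs0, hcm1]; linear_combination -g02 - hS2)
            (by simp only [hs0, hcm1]; linear_combination hS3 - g12)
            (by simp only [hs0, hcm1]; linear_combination 2*f0 + 2*f1 + hm)⟩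
    by_cases p1 : (-1:ℝ)/3 ≤ X 1 1
    · -- pivot 1
      have hdpos : (0:ℝ) < X 1 1 + 1 := by linarith
      have hrpos : (0:ℝ) < Real.sqrt ((X 1 1 + 1)/2) := Real.sqrt_pos.mpr (by linarith)
      set r : ℝ := Real.sqrt ((X 1 1 + 1)/2) with hrdef
      have hrne : r ≠ 0 := ne_of_gt hrpos
      have hr2 : r ^ 2 = (X 1 1 + 1)/2 := Real.sq_sqrt (by linarith)
      have h2r : (2*r) * (2*r) = 2 * (X 1 1 + 1) := by linear_combination 4 * hr2
      have f0 : ((X 0 1 / (2*r)):ℝ) ^ 2 = (X 0 0 + 1)/2 := by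
        rw [div_pow, show ((2:ℝ)*r)^2 = 2 * (X 1 1 + 1) from by linear_combination 4*hr2,
          div_eq_div_iff (by linarith) (by norm_num)]
        linear_combination 2 * hB1
      have f1 : (r:ℝ) ^ 2 = (X 1 1 + 1)/2 := hr2
      have f2 : ((X 1 2 / (2*r)):ℝ) ^ 2 = (X 2 2 + 1)/2 := by
        rw [div_pow, show ((2:ℝ)*r)^2 = 2 * (X 1 1 + 1) from by linear_combination 4*hr2,
          div_eq_div_iff (by linarith) (by norm_num)]
        linear_combination 2 * hB4
      have g01 : 2 * (((X 0 1 / (2*r)):ℝ) * r) = X 0 1 := by field_simp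
      have g02 : 2 * (((X 0 1 / (2*r)):ℝ) * (X 1 2 / (2*r))) = X 0 2 := by
        rw [div_mul_div_comm, h2r, mul_div_assoc', div_eq_iff (by linarith)]
        linear_combination 2 * hB5
      have g12 : 2 * ((r:ℝ) * (X 1 2 / (2*r))) = X 1 2 := by field_simp
      refine ⟨_, build X (Real.arccos ((X.trace - 1) / 2)) (X 0 1 / (2*r)) r (X 1 2 / (2*r))
            (by linear_combination f0 + f1 + f2 + (1/2) * hm)
            (by simp only [hs0, hcm1]; linear_combination 2*f1 + 2*f2 + hm)
            (by simp only [hs0, hcm1]; linear_combination -g01)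
            (by simp only [hs0, hcm1]; linear_combination -g02)
            (by simp only [hs0, hcm1]; linear_combination hS1 - g01)
            (by simp only [hs0, hcm1]; linear_combination 2*f0 + 2*f2 + hm)
            (by simp only [hs0, hcm1]; linear_combination -g12)
            (by simp only [hs0, hcm1]; linear_combination -g02 - hS2)
            (by simp only [hs0, hcm1]; linear_combination hS3 - g12)
            (by simp only [hs0, hcm1]; linear_combination 2*f0 + 2*f1 + hm)⟩
    · -- pivot 2
      have p2 : (-1:ℝ)/3 ≤ X 2 2 := by linarith
      have hdpos : (0:ℝ) < X 2 2 + 1 := by linarith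
      have hrpos : (0:ℝ) < Real.sqrt ((X 2 2 + 1)/2) := Real.sqrt_pos.mpr (by linarith)
      set r : ℝ := Real.sqrt ((X 2 2 + 1)/2) with hrdef
      have hrne : r ≠ 0 := ne_of_gt hrpos
      have hr2 : r ^ 2 = (X 2 2 + 1)/2 := Real.sq_sqrt (by linarith)
      have h2r : (2*r) * (2*r) = 2 * (X 2 2 + 1) := by linear_combination 4 * hr2
      have f0 : ((X 0 2 / (2*r)):ℝ) ^ 2 = (X 0 0 + 1)/2 := by
        rw [div_pow, show ((2:ℝ)*r)^2 = 2 * (X 2 2 + 1) from by linear_combination 4*hr2,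
          div_eq_div_iff (by linarith) (by norm_num)]
        linear_combination 2 * hB2
      have f1 : ((X 1 2 / (2*r)):ℝ) ^ 2 = (X 1 1 + 1)/2 := by
        rw [div_pow, show ((2:ℝ)*r)^2 = 2 * (X 2 2 + 1) from by linear_combination 4*hr2,
          div_eq_div_iff (by linarith) (by norm_num)]
        linear_combination 2 * hB4
      have f2 : (r:ℝ) ^ 2 = (X 2 2 + 1)/2 := hr2
      have g01 : 2 * (((X 0 2 / (2*r)):ℝ) * (X 1 2 / (2*r))) = X 0 1 := by
        rw [div_mul_div_comm, h2r, mul_div_assoc', div_eq_iff (by linarith)]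
        linear_combination 2 * hB6
      have g02 : 2 * (((X 0 2 / (2*r)):ℝ) * r) = X 0 2 := by field_simp
      have g12 : 2 * (((X 1 2 / (2*r)):ℝ) * r) = X 1 2 := by field_simp
      refine ⟨_, build X (Real.arccos ((X.trace - 1) / 2)) (X 0 2 / (2*r)) (X 1 2 / (2*r)) r
            (by linear_combination f0 + f1 + f2 + (1/2) * hm)
            (by simp only [hs0, hcm1]; linear_combination 2*f1 + 2*f2 + hm)
            (by simp only [hs0, hcm1]; linear_combination -g01)
            (by simp only [hs0, hcm1]; linear_combination -g02)
            (by simp only [hs0, hcm1]; linear_combination hS1 - g01)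
            (by simp only [hs0, hcm1]; linear_combination 2*f0 + 2*f2 + hm)
            (by simp only [hs0, hcm1]; linear_combination -g12)
            (by simp only [hs0, hcm1]; linear_combination -g02 - hS2)
            (by simp only [hs0, hcm1]; linear_combination hS3 - g12)
            (by simp only [hs0, hcm1]; linear_combination 2*f0 + 2*f1 + hm)⟩
  -- generic case
  have hlt3 : (X 0 0 + X 1 1 + X 2 2) < 3 := lt_of_le_of_ne ht3 h3
  have hgt : -1 < (X 0 0 + X 1 1 + X 2 2) := lt_of_le_of_ne htm1 (Ne.symm hm)
  have n3 : (0:ℝ) < 3 - (X 0 0 + X 1 1 + X 2 2) := by linarith only [hlt3]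
  have n1 : (0:ℝ) < 1 + (X 0 0 + X 1 1 + X 2 2) := by linarith only [hgt]
  have hargpos : 0 < 1 - ((X.trace - 1) / 2) ^ 2 := by rw [hTt]; exact argpos hgt hlt3
  have hspos : 0 < Real.sin (Real.arccos ((X.trace - 1) / 2)) := by rw [hsin]; exact Real.sqrt_pos.mpr hargpos
  have hsne : Real.sin (Real.arccos ((X.trace - 1) / 2)) ≠ 0 := ne_of_gt hspos
  have hs2 : (Real.sin (Real.arccos ((X.trace - 1) / 2))) ^ 2 = 1 - ((X.trace - 1) / 2) ^ 2 := by
    rw [hsin]; exact Real.sq_sqrt (le_of_lt hargpos)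
  have hss : (2 * Real.sin (Real.arccos ((X.trace - 1) / 2))) * (2 * Real.sin (Real.arccos ((X.trace - 1) / 2))) = (3 - (X 0 0 + X 1 1 + X 2 2)) * (1 + (X 0 0 + X 1 1 + X 2 2)) := by
    linear_combination 4 * hs2 - (X.trace + (X 0 0 + X 1 1 + X 2 2) - 2) * hTt
  have hcval : Real.cos (Real.arccos ((X.trace - 1) / 2)) = ((X 0 0 + X 1 1 + X 2 2) - 1) / 2 := by rw [hcos, hTt]
  have hcne : (1:ℝ) - Real.cos (Real.arccos ((X.trace - 1) / 2)) ≠ 0 := by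
    rw [hcval]; exact ne_of_gt (by linarith only [hlt3])

  have e0 : (1 - Real.cos (Real.arccos ((X.trace - 1) / 2))) * (((X 2 1 - X 1 2) / (2 * Real.sin (Real.arccos ((X.trace - 1) / 2)))) * ((X 2 1 - X 1 2) / (2 * Real.sin (Real.arccos ((X.trace - 1) / 2))))) = (1 + X 0 0 - X 1 1 - X 2 2) / 2 := by
    rw [hcval, div_mul_div_comm, hss]
    rw [mul_div_assoc', div_eq_div_iff (mul_pos n3 n1).ne' (by norm_num)]
    linear_combination (3 - (X 0 0 + X 1 1 + X 2 2)) * hD0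
  have e1 : (1 - Real.cos (Real.arccos ((X.trace - 1) / 2))) * (((X 0 2 - X 2 0) / (2 * Real.sin (Real.arccos ((X.trace - 1) / 2)))) * ((X 0 2 - X 2 0) / (2 * Real.sin (Real.arccos ((X.trace - 1) / 2))))) = (1 - X 0 0 + X 1 1 - X 2 2) / 2 := by
    rw [hcval, div_mul_div_comm, hss]
    rw [mul_div_assoc', div_eq_div_iff (mul_pos n3 n1).ne' (by norm_num)]
    linear_combination (3 - (X 0 0 + X 1 1 + X 2 2)) * hD1
  have e2 : (1 - Real.cos (Real.arccos ((X.trace - 1) / 2))) * (((X 1 0 - X 0 1) / (2 * Real.sin (Real.arccos ((X.trace - 1) / 2)))) * ((X 1 0 - X 0 1) / (2 * Real.sin (Real.arccos ((X.trace - 1) / 2))))) = (1 - X 0 0 - X 1 1 + X 2 2) / 2 := by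
    rw [hcval, div_mul_div_comm, hss]
    rw [mul_div_assoc', div_eq_div_iff (mul_pos n3 n1).ne' (by norm_num)]
    linear_combination (3 - (X 0 0 + X 1 1 + X 2 2)) * hD2
  have m01 : (1 - Real.cos (Real.arccos ((X.trace - 1) / 2))) * (((X 2 1 - X 1 2) / (2 * Real.sin (Real.arccos ((X.trace - 1) / 2)))) * ((X 0 2 - X 2 0) / (2 * Real.sin (Real.arccos ((X.trace - 1) / 2))))) = (X 0 1 + X 1 0) / 2 := by
    rw [hcval, div_mul_div_comm, hss]
    rw [mul_div_assoc', div_eq_div_iff (mul_pos n3 n1).ne' (by norm_num)]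
    linear_combination (3 - (X 0 0 + X 1 1 + X 2 2)) * hJ01
  have m02 : (1 - Real.cos (Real.arccos ((X.trace - 1) / 2))) * (((X 2 1 - X 1 2) / (2 * Real.sin (Real.arccos ((X.trace - 1) / 2)))) * ((X 1 0 - X 0 1) / (2 * Real.sin (Real.arccos ((X.trace - 1) / 2))))) = (X 0 2 + X 2 0) / 2 := by
    rw [hcval, div_mul_div_comm, hss]
    rw [mul_div_assoc', div_eq_div_iff (mul_pos n3 n1).ne' (by norm_num)]
    linear_combination (3 - (X 0 0 + X 1 1 + X 2 2)) * hJ02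
  have m12 : (1 - Real.cos (Real.arccos ((X.trace - 1) / 2))) * (((X 0 2 - X 2 0) / (2 * Real.sin (Real.arccos ((X.trace - 1) / 2)))) * ((X 1 0 - X 0 1) / (2 * Real.sin (Real.arccos ((X.trace - 1) / 2))))) = (X 1 2 + X 2 1) / 2 := by
    rw [hcval, div_mul_div_comm, hss]
    rw [mul_div_assoc', div_eq_div_iff (mul_pos n3 n1).ne' (by norm_num)]
    linear_combination (3 - (X 0 0 + X 1 1 + X 2 2)) * hJ12
  have s0 : Real.sin (Real.arccos ((X.trace - 1) / 2)) * ((X 2 1 - X 1 2) / (2 * Real.sin (Real.arccos ((X.trace - 1) / 2)))) = (X 2 1 - X 1 2) / 2 := by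
    field_simp
  have s1 : Real.sin (Real.arccos ((X.trace - 1) / 2)) * ((X 0 2 - X 2 0) / (2 * Real.sin (Real.arccos ((X.trace - 1) / 2)))) = (X 0 2 - X 2 0) / 2 := by
    field_simp
  have s2 : Real.sin (Real.arccos ((X.trace - 1) / 2)) * ((X 1 0 - X 0 1) / (2 * Real.sin (Real.arccos ((X.trace - 1) / 2)))) = (X 1 0 - X 0 1) / 2 := by
    field_simp
  have hn : ((X 2 1 - X 1 2) / (2 * Real.sin (Real.arccos ((X.trace - 1) / 2)))) ^ 2 + ((X 0 2 - X 2 0) / (2 * Real.sin (Real.arccos ((X.trace - 1) / 2)))) ^ 2 + ((X 1 0 - X 0 1) / (2 * Real.sin (Real.arccos ((X.trace - 1) / 2)))) ^ 2 = 1 := by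
    refine mul_left_cancel₀ hcne ?_
    rw [mul_one]
    linear_combination e0 + e1 + e2 + hcos + (1/2) * hTt
  exact ⟨_, build X (Real.arccos ((X.trace - 1) / 2)) ((X 2 1 - X 1 2) / (2 * Real.sin (Real.arccos ((X.trace - 1) / 2)))) ((X 0 2 - X 2 0) / (2 * Real.sin (Real.arccos ((X.trace - 1) / 2)))) ((X 1 0 - X 0 1) / (2 * Real.sin (Real.arccos ((X.trace - 1) / 2)))) hn
    (by linear_combination e1 + e2)
    (by linear_combination s2 - m01)
    (by linear_combination - s1 - m02)
    (by linear_combination - s2 - m01)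
    (by linear_combination e0 + e2)
    (by linear_combination s0 - m12)
    (by linear_combination s1 - m02)
    (by linear_combination - s0 - m12)
    (by linear_combination e0 + e1)⟩

/-- the set R̄₁𝒳₁·P₂ is contained in the polytope {y : A R̄₁ᵀ y ≤ b},
where b_m is the maximum of ⟨Exp(θw)a_m, v⟩ over vertices v of P₂, θ ∈ [0,θ₁'] and
unit axes w. -/
theorem stmt_16 (θ₁' : ℝ) (hθ : θ₁' ∈ Set.Icc 0 Real.pi)
    (V₂ : Finset E3) (hV₂ : V₂.Nonempty)
    (R₁ : Matrix (Fin 3) (Fin 3) ℝ) (hR₁ : isSO3 R₁)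
    (M : ℕ) (A : Fin M → E3) (hA : ∀ m, ‖A m‖ = 1) (b : Fin M → ℝ)
    (hb : ∀ m, IsGreatest
      {x : ℝ | ∃ v ∈ V₂, ∃ θ ∈ Set.Icc 0 θ₁', ∃ w : E3, ‖w‖ = 1 ∧
        x = inner ℝ (ofv ((rod θ w).mulVec (tv (A m)))) v} (b m)) :
    {y : E3 | ∃ X : Matrix (Fin 3) (Fin 3) ℝ, isSO3 X ∧ rotDist X 1 ≤ θ₁' ∧
        ∃ t₂ ∈ convexHull ℝ (V₂ : Set E3), y = ofv ((R₁ * X).mulVec (tv t₂))} ⊆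
      {y : E3 | ∀ m, (inner ℝ (A m) (ofv (R₁.transpose.mulVec (tv y))) : ℝ) ≤ b m} := by
  intro y hy
  obtain ⟨X, hX, hdis, t₂, ht₂, rfl⟩ := hy
  intro m
  have hXT : isSO3 Xᵀ := by
    refine ⟨?_, by rw [Matrix.det_transpose]; exact hX.2⟩
    rw [Matrix.transpose_transpose]
    exact mul_eq_one_comm.mp hX.1
  obtain ⟨w, hw, hrod⟩ := so3_rod Xᵀ hXT
  have hθeq : Real.arccos ((Xᵀ.trace - 1) / 2) = rotDist X 1 := by
    rw [rotDist, Matrix.transpose_one, Matrix.mul_one, Matrix.trace_transpose]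
  have hθ0 : 0 ≤ Real.arccos ((Xᵀ.trace - 1) / 2) := Real.arccos_nonneg _
  have hθle : Real.arccos ((Xᵀ.trace - 1) / 2) ≤ θ₁' := by rw [hθeq]; exact hdis
  have key : (inner ℝ (A m) (ofv (R₁.transpose.mulVec (tv (ofv ((R₁ * X).mulVec (tv t₂)))))) : ℝ)
      = inner ℝ (ofv (Xᵀ.mulVec (tv (A m)))) t₂ := by
    have h1 : tv (ofv ((R₁ * X).mulVec (tv t₂))) = (R₁ * X).mulVec (tv t₂) := rfl
    rw [h1, Matrix.mulVec_mulVec, ← Matrix.mul_assoc, hR₁.1, Matrix.one_mul]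
    simp [PiLp.inner_apply, RCLike.inner_apply, Fin.sum_univ_three, Matrix.mulVec,
      dotProduct, tv, ofv, Matrix.transpose_apply]
    ring
  show (inner ℝ (A m) (ofv (R₁.transpose.mulVec (tv (ofv ((R₁ * X).mulVec (tv t₂)))))) : ℝ) ≤ b m
  rw [key]
  have hconv : Convex ℝ {z : E3 | (inner ℝ (ofv (Xᵀ.mulVec (tv (A m)))) z : ℝ) ≤ b m} :=
    convex_halfSpace_le ⟨fun a b' => inner_add_right _ _ _, fun r a => real_inner_smul_right _ a r⟩ _
  have hsub : (V₂ : Set E3) ⊆ {z : E3 | (inner ℝ (ofv (Xᵀ.mulVec (tv (A m)))) z : ℝ) ≤ b m} := by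
    intro v hv
    exact (hb m).2 ⟨v, hv, Real.arccos ((Xᵀ.trace - 1) / 2), Set.mem_Icc.mpr ⟨hθ0, hθle⟩,
      w, hw, by rw [← hrod]⟩
  exact convexHull_min hsub hconv ht₂
end
end
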